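/- Let 0 < α < 1, T > 0, t̂ ∈ (0,T], and let u, φ : [0,T] → ℝ be such that u - φ attains its maximum over [0,T] at t̂, and assume that K_{(0,t̂)}[u](t̂) and K_{(0,t̂)}[φ](t̂) both exist. Then J[φ](t̂) + K_{(0,t̂)}[φ](t̂) ≤ J[u](t̂) + K_{(0,t̂)}[u](t̂), where J[f](t̂) = (f(t̂)-f(0))/(t̂^α Γ(1-α)) and K_{(0,t̂)}[f](t̂) = (α/Γ(1-α)) ∫_0^{t̂} (f(t̂)-f(t̂-τ)) τ^{-α-1} dτ. -/
import Mathlib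


open Real MeasureTheory Filter

theorem JK_test_function_le (α T that : ℝ) (hα : 0 < α) (hα1 : α < 1)
    (hT : 0 < T) (hthat : that ∈ Set.Ioc (0:ℝ) T)
    (u φ : ℝ → ℝ)
    (hmax : ∀ t ∈ Set.Icc (0:ℝ) T, u t - φ t ≤ u that - φ that)
    (Ku Kφ : ℝ)
    (hintu : ∀ ρ ∈ Set.Ioo (0:ℝ) that,
      IntervalIntegrable (fun τ => (u that - u (that - τ)) * τ ^ (-α - 1))
        MeasureTheory.volume ρ that)
    (hintφ : ∀ ρ ∈ Set.Ioo (0:ℝ) that,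
      IntervalIntegrable (fun τ => (φ that - φ (that - τ)) * τ ^ (-α - 1))
        MeasureTheory.volume ρ that)
    (hKu : Tendsto (fun ρ : ℝ =>
        (α / Real.Gamma (1 - α)) *
          ∫ τ in ρ..that, (u that - u (that - τ)) * τ ^ (-α - 1))
      (nhdsWithin 0 (Set.Ioi 0)) (nhds Ku))
    (hKφ : Tendsto (fun ρ : ℝ =>
        (α / Real.Gamma (1 - α)) *
          ∫ τ in ρ..that, (φ that - φ (that - τ)) * τ ^ (-α - 1))
      (nhdsWithin 0 (Set.Ioi 0)) (nhds Kφ)) :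
    (φ that - φ 0) / (that ^ α * Real.Gamma (1 - α)) + Kφ ≤
      (u that - u 0) / (that ^ α * Real.Gamma (1 - α)) + Ku := by
  obtain ⟨hthat0, hthatT⟩ := hthat
  have hΓ : 0 < Real.Gamma (1 - α) := Real.Gamma_pos_of_pos (by linarith)
  have hden : 0 < that ^ α * Real.Gamma (1 - α) :=
    mul_pos (Real.rpow_pos_of_pos hthat0 α) hΓ
  have hkey : ∀ τ ∈ Set.Icc (0:ℝ) that,
      φ that - φ (that - τ) ≤ u that - u (that - τ) := by
    intro τ hτ
    have h := hmax (that - τ) ⟨by linarith [hτ.2], by linarith [hτ.1]⟩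
    linarith
  have hJ : φ that - φ 0 ≤ u that - u 0 := by
    have := hkey that ⟨le_of_lt hthat0, le_refl _⟩
    simpa using this
  have hK : Kφ ≤ Ku := by
    refine le_of_tendsto_of_tendsto hKφ hKu ?_
    have hmem : Set.Ioo (0:ℝ) that ∈ nhdsWithin (0:ℝ) (Set.Ioi 0) :=
      Ioo_mem_nhdsGT_of_mem ⟨le_refl 0, hthat0⟩
    filter_upwards [hmem] with ρ hρ
    have hint : (∫ τ in ρ..that, (φ that - φ (that - τ)) * τ ^ (-α - 1)) ≤
        ∫ τ in ρ..that, (u that - u (that - τ)) * τ ^ (-α - 1) := by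
      refine intervalIntegral.integral_mono_on (le_of_lt hρ.2)
        (hintφ ρ hρ) (hintu ρ hρ) ?_
      intro τ hτ
      exact mul_le_mul_of_nonneg_right
        (hkey τ ⟨le_trans hρ.1.le hτ.1, hτ.2⟩)
        (Real.rpow_nonneg (le_trans hρ.1.le hτ.1) _)
    exact mul_le_mul_of_nonneg_left hint
      (div_nonneg hα.le hΓ.le)
  gcongr
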